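/- Let ε > 0 and let p = p(n) ∈ [0,1] satisfy p(n) ≤ (1 − ε) log n / n for all sufficiently large n. Then asymptotically almost surely, every orientation of the binomial random graph G(n,p) contains a Sullivan vertex. -/

import Mathlib

open Filter

/-- The outneighbourhood `N1(v)` of `v` in the digraph with arc relation `D`. -/
def outNbr {V : Type*} (D : V → V → Prop) (v : V) : Set V := {w | w ≠ v ∧ D v w}

/-- The inneighbourhood `N⁻(v)` of `v`. -/
def inNbr {V : Type*} (D : V → V → Prop) (v : V) : Set V := {w | w ≠ v ∧ D w v}

/-- The second outneighbourhood `N2(v)` of `v`. -/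
def outNbr2 {V : Type*} (D : V → V → Prop) (v : V) : Set V :=
  {w | w ∉ insert v (outNbr D v) ∧ ∃ u ∈ outNbr D v, D u w}

/-- `v` is a Seymour vertex: `|N2(v)| ≥ |N1(v)|`. -/
def SeymourVertex {V : Type*} (D : V → V → Prop) (v : V) : Prop :=
  (outNbr D v).ncard ≤ (outNbr2 D v).ncard

/-- `v` is a Sullivan vertex: `|N2(v)| ≥ |N⁻(v)|`. -/
def SullivanVertex {V : Type*} (D : V → V → Prop) (v : V) : Prop :=
  (inNbr D v).ncard ≤ (outNbr2 D v).ncard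

/-- An oriented graph: an asymmetric (hence irreflexive and loopless) arc relation. -/
def OrientedGraph {V : Type*} (D : V → V → Prop) : Prop := ∀ u v, D u v → ¬ D v u

/-- `D` is an orientation of the simple graph `G`. -/
def Orients {V : Type*} (D : V → V → Prop) (G : SimpleGraph V) : Prop :=
  OrientedGraph D ∧ ∀ u v, G.Adj u v ↔ (D u v ∨ D v u)

/-- Strong connectivity of a digraph: every vertex reaches every other by a directed path. -/
def StrongConn {V : Type*} (D : V → V → Prop) : Prop := ∀ u v, Relation.ReflTransGen D u v

/-- The number of edges of `G` with one endpoint in `A` and the other in `B`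
(counted via ordered pairs; equals `e(A,B)` for disjoint `A`, `B`). -/
noncomputable def eBtw {V : Type*} (G : SimpleGraph V) (A B : Set V) : ℕ :=
  {p : V × V | p.1 ∈ A ∧ p.2 ∈ B ∧ G.Adj p.1 p.2}.ncard

/-- The number of edges of `G` with both endpoints in `A`. -/
noncomputable def eIn {V : Type*} (G : SimpleGraph V) (A : Set V) : ℕ :=
  {e | e ∈ G.edgeSet ∧ ∀ v ∈ e, v ∈ A}.ncard

open scoped Classical in
/-- The probability that the binomial random graph `G(n,p)` satisfies the property `P`. -/
noncomputable def gnpProb (n : ℕ) (p : ℝ) (P : SimpleGraph (Fin n) → Prop) : ℝ :=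
  ∑ G : SimpleGraph (Fin n),
    if P G then p ^ G.edgeSet.ncard * (1 - p) ^ (n.choose 2 - G.edgeSet.ncard) else 0


namespace Stmt14

open scoped Classical

noncomputable def K (n : ℕ) : Finset (Sym2 (Fin n)) := (⊤ : SimpleGraph (Fin n)).edgeFinset

lemma card_K (n : ℕ) : (K n).card = n.choose 2 := by
  rw [K, SimpleGraph.card_edgeFinset_top_eq_card_choose_two, Fintype.card_fin]

lemma not_isDiag_of_mem_K {n : ℕ} {e : Sym2 (Fin n)} (he : e ∈ K n) : ¬ e.IsDiag := by
  have : e ∈ (⊤ : SimpleGraph (Fin n)).edgeSet := by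
    simpa [K, SimpleGraph.mem_edgeFinset] using he
  simpa [SimpleGraph.edgeSet_top] using this

lemma edgeFinset_subset_K {n : ℕ} (G : SimpleGraph (Fin n)) : G.edgeFinset ⊆ K n := by
  exact SimpleGraph.edgeFinset_mono le_top

/-- reindex sums over graphs by sums over edge sets -/
lemma sum_graphs_eq {n : ℕ} (f : Finset (Sym2 (Fin n)) → ℝ) :
    ∑ G : SimpleGraph (Fin n), f G.edgeFinset = ∑ S ∈ (K n).powerset, f S := by
  refine Finset.sum_nbij' (fun G => G.edgeFinset)
    (fun S => SimpleGraph.fromEdgeSet (S : Set (Sym2 (Fin n)))) ?_ ?_ ?_ ?_ ?_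
  · intro G _; exact Finset.mem_powerset.2 (edgeFinset_subset_K G)
  · intro S _; exact Finset.mem_univ _
  · intro G _
    show SimpleGraph.fromEdgeSet (↑G.edgeFinset) = G
    rw [SimpleGraph.coe_edgeFinset, SimpleGraph.fromEdgeSet_edgeSet]
  · intro S hS
    apply Finset.coe_injective
    rw [SimpleGraph.coe_edgeFinset, SimpleGraph.edgeSet_fromEdgeSet]
    ext e
    simp only [Set.mem_diff, Finset.mem_coe, Set.mem_setOf_eq, and_iff_left_iff_imp]
    intro he
    exact not_isDiag_of_mem_K (Finset.mem_powerset.1 hS he)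
  · intro G _; rfl

lemma sum_pow_powerset {α : Type*} [DecidableEq α] (T : Finset α) (p q : ℝ) :
    ∑ S ∈ T.powerset, p ^ S.card * q ^ (T.card - S.card) = (p + q) ^ T.card := by
  rw [← Finset.prod_const, Finset.prod_add]
  refine Finset.sum_congr rfl fun S hS => ?_
  rw [Finset.prod_const, Finset.prod_const, Finset.card_sdiff_of_subset (Finset.mem_powerset.1 hS)]

lemma fromEdgeSet_edgeFinset {n : ℕ} (G : SimpleGraph (Fin n)) :
    SimpleGraph.fromEdgeSet (↑G.edgeFinset) = G := by
  rw [SimpleGraph.coe_edgeFinset, SimpleGraph.fromEdgeSet_edgeSet]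

lemma edgeFinset_fromEdgeSet {n : ℕ} (S : Finset (Sym2 (Fin n))) (hS : S ⊆ K n)
    {inst : Fintype (SimpleGraph.fromEdgeSet (↑S : Set (Sym2 (Fin n)))).edgeSet} :
    @SimpleGraph.edgeFinset _ _ inst = S := by
  apply Finset.coe_injective
  rw [SimpleGraph.coe_edgeFinset, SimpleGraph.edgeSet_fromEdgeSet]
  ext e
  simp only [Set.mem_diff, Finset.mem_coe, Set.mem_setOf_eq, and_iff_left_iff_imp]
  intro he
  exact not_isDiag_of_mem_K (hS he)

lemma ncard_edgeSet {n : ℕ} (G : SimpleGraph (Fin n)) :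
    G.edgeSet.ncard = G.edgeFinset.card := by
  rw [← SimpleGraph.coe_edgeFinset, Set.ncard_coe_finset]

lemma gnpProb_eq {n : ℕ} {p : ℝ} (P : SimpleGraph (Fin n) → Prop)
    (Q : Finset (Sym2 (Fin n)) → Prop)
    (hPQ : ∀ S ∈ (K n).powerset, (P (SimpleGraph.fromEdgeSet (↑S : Set (Sym2 (Fin n)))) ↔ Q S)) :
    gnpProb n p P = ∑ S ∈ (K n).powerset.filter Q,
      p ^ S.card * (1 - p) ^ ((K n).card - S.card) := by
  rw [gnpProb]
  refine Eq.trans (Finset.sum_congr rfl fun G _ => ?_)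
    (Eq.trans (sum_graphs_eq (fun S => if P (SimpleGraph.fromEdgeSet (↑S : Set (Sym2 (Fin n))))
        then p ^ S.card * (1 - p) ^ ((K n).card - S.card) else 0))
      (Eq.trans (Finset.sum_congr rfl fun S hS => if_congr (hPQ S hS) rfl rfl)
        (Finset.sum_filter Q _).symm))
  simp only [fromEdgeSet_edgeFinset, ncard_edgeSet, card_K]

lemma gnpProb_avoid {n : ℕ} {p : ℝ} (F : Finset (Sym2 (Fin n))) (hF : F ⊆ K n) :
    gnpProb n p (fun G => Disjoint G.edgeFinset F) = (1 - p) ^ F.card := by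
  rw [gnpProb_eq _ (fun S => Disjoint S F) (fun S hS => by
    rw [edgeFinset_fromEdgeSet S (Finset.mem_powerset.1 hS)])]
  have h2 : @Finset.filter _ (fun S => Disjoint S F) (fun S => Classical.propDecidable _)
      (K n).powerset = ((K n) \ F).powerset := by
    ext S
    simp only [Finset.mem_filter, Finset.mem_powerset, Finset.subset_sdiff]
  refine Eq.trans (Finset.sum_congr h2 fun _ _ => rfl) ?_
  have hcard : ∀ S ∈ ((K n) \ F).powerset,
      p ^ S.card * (1 - p) ^ ((K n).card - S.card)
      = (1 - p) ^ F.card * (p ^ S.card * (1 - p) ^ (((K n) \ F).card - S.card)) := by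
    intro S hS
    have h3 : S.card ≤ ((K n) \ F).card := Finset.card_le_card (Finset.mem_powerset.1 hS)
    have h4 : ((K n) \ F).card = (K n).card - F.card := Finset.card_sdiff_of_subset hF
    have h5 : F.card ≤ (K n).card := Finset.card_le_card hF
    have : (K n).card - S.card = F.card + (((K n) \ F).card - S.card) := by omega
    rw [this, pow_add]; ring
  refine Eq.trans (Finset.sum_congr rfl hcard) ?_
  rw [← Finset.mul_sum, sum_pow_powerset]
  norm_num

lemma gnpProb_true {n : ℕ} {p : ℝ} : gnpProb n p (fun _ => True) = 1 := by
  have := gnpProb_avoid (n := n) (p := p) ∅ (Finset.empty_subset _)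
  simpa using this

def iso {n : ℕ} (G : SimpleGraph (Fin n)) (v : Fin n) : Prop := ∀ u, ¬ G.Adj v u

noncomputable def Fv {n : ℕ} (v : Fin n) : Finset (Sym2 (Fin n)) :=
  (K n).filter (fun e => v ∈ e)

lemma Fv_subset {n : ℕ} (v : Fin n) : Fv v ⊆ K n := Finset.filter_subset _ _

lemma mem_K_iff {n : ℕ} (a b : Fin n) : s(a, b) ∈ K n ↔ a ≠ b := by
  simp [K, SimpleGraph.mem_edgeFinset]

lemma mem_Fv_iff {n : ℕ} (v : Fin n) (e : Sym2 (Fin n)) :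
    e ∈ Fv v ↔ ∃ u, u ≠ v ∧ e = s(v, u) := by
  induction e using Sym2.ind with
  | _ a b =>
    simp only [Fv, Finset.mem_filter, mem_K_iff, Sym2.mem_iff]
    constructor
    · rintro ⟨hab, (rfl | rfl)⟩
      · exact ⟨b, fun h => hab h.symm, rfl⟩
      · exact ⟨a, fun h => hab h, Sym2.eq_swap⟩
    · rintro ⟨u, huv, he⟩
      rw [Sym2.eq_iff] at he
      rcases he with ⟨rfl, rfl⟩ | ⟨rfl, rfl⟩
      · exact ⟨fun h => huv h.symm, Or.inl rfl⟩
      · exact ⟨fun h => huv h, Or.inr rfl⟩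

lemma card_Fv {n : ℕ} (v : Fin n) : (Fv v).card = n - 1 := by
  have : Fv v = (Finset.univ.erase v).image (fun u => s(v, u)) := by
    ext e
    rw [mem_Fv_iff]
    simp only [Finset.mem_image, Finset.mem_erase, Finset.mem_univ, and_true]
    constructor
    · rintro ⟨u, hu, rfl⟩; exact ⟨u, hu, rfl⟩
    · rintro ⟨u, hu, rfl⟩; exact ⟨u, hu, rfl⟩
  rw [this, Finset.card_image_of_injective _ (fun u u' h => by
      rcases Sym2.eq_iff.1 h with ⟨-, rfl⟩ | ⟨h1, h2⟩
      · rfl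
      · exact h2.trans h1), Finset.card_erase_of_mem (Finset.mem_univ v),
    Finset.card_univ, Fintype.card_fin]

lemma iso_iff_disjoint {n : ℕ} (G : SimpleGraph (Fin n)) (v : Fin n) :
    iso G v ↔ Disjoint G.edgeFinset (Fv v) := by
  rw [Finset.disjoint_left]
  constructor
  · intro h e he hev
    rw [mem_Fv_iff] at hev
    obtain ⟨u, _, rfl⟩ := hev
    rw [SimpleGraph.mem_edgeFinset, SimpleGraph.mem_edgeSet] at he
    exact h u he
  · intro h u hadj
    have h1 : s(v, u) ∈ G.edgeFinset := by
      rw [SimpleGraph.mem_edgeFinset, SimpleGraph.mem_edgeSet]; exact hadj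
    have h2 : s(v, u) ∈ Fv v := by
      rw [mem_Fv_iff]; exact ⟨u, fun huv => G.loopless.irrefl v (huv ▸ hadj), rfl⟩
    exact h h1 h2

lemma Fv_inter {n : ℕ} {u v : Fin n} (huv : u ≠ v) : Fv u ∩ Fv v = {s(u, v)} := by
  ext e
  simp only [Finset.mem_inter, mem_Fv_iff, Finset.mem_singleton]
  constructor
  · rintro ⟨⟨a, hau, rfl⟩, b, hbv, he⟩
    rw [Sym2.eq_iff] at he
    rcases he with ⟨huv', rfl⟩ | ⟨rfl, rfl⟩
    · exact absurd huv' huv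
    · rfl
  · rintro rfl
    exact ⟨⟨v, huv.symm, rfl⟩, ⟨u, huv, Sym2.eq_swap⟩⟩

lemma card_Fv_union {n : ℕ} {u v : Fin n} (huv : u ≠ v) :
    (Fv u ∪ Fv v).card = 2 * n - 3 := by
  have h2 : 2 ≤ n := by
    by_contra h
    interval_cases n
    · exact absurd (Subsingleton.elim u v) huv
    · exact absurd (Subsingleton.elim u v) huv
  have := Finset.card_union_add_card_inter (Fv u) (Fv v)
  rw [Fv_inter huv, card_Fv, card_Fv, Finset.card_singleton] at this
  omega

lemma gnpProb_iso {n : ℕ} {p : ℝ} (v : Fin n) :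
    gnpProb n p (fun G => iso G v) = (1 - p) ^ (n - 1) := by
  have h := gnpProb_avoid (n := n) (p := p) (Fv v) (Fv_subset v)
  rw [card_Fv] at h
  rw [← h]
  exact congrArg _ (funext fun G => propext (iso_iff_disjoint G v))

lemma gnpProb_iso_pair {n : ℕ} {p : ℝ} {u v : Fin n} (huv : u ≠ v) :
    gnpProb n p (fun G => iso G u ∧ iso G v) = (1 - p) ^ (2 * n - 3) := by
  have h := gnpProb_avoid (n := n) (p := p) (Fv u ∪ Fv v)
    (Finset.union_subset (Fv_subset u) (Fv_subset v))
  rw [card_Fv_union huv] at h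
  rw [← h]
  refine congrArg _ (funext fun G => propext ?_)
  rw [Finset.disjoint_union_right, iso_iff_disjoint, iso_iff_disjoint]

noncomputable def wt (n : ℕ) (p : ℝ) (G : SimpleGraph (Fin n)) : ℝ :=
  p ^ G.edgeSet.ncard * (1 - p) ^ (n.choose 2 - G.edgeSet.ncard)

lemma gnpProb_eq_sum_wt {n : ℕ} {p : ℝ} (P : SimpleGraph (Fin n) → Prop) :
    gnpProb n p P = ∑ G : SimpleGraph (Fin n), if P G then wt n p G else 0 := rfl

lemma wt_nonneg {n : ℕ} {p : ℝ} (hp0 : 0 ≤ p) (hp1 : p ≤ 1) (G : SimpleGraph (Fin n)) :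
    0 ≤ wt n p G :=
  mul_nonneg (pow_nonneg hp0 _) (pow_nonneg (by linarith) _)

lemma sum_wt {n : ℕ} {p : ℝ} : ∑ G : SimpleGraph (Fin n), wt n p G = 1 := by
  have h := gnpProb_true (n := n) (p := p)
  rw [gnpProb_eq_sum_wt] at h
  simpa using h

noncomputable def ind (P : Prop) : ℝ := if P then 1 else 0

lemma sum_wt_ind {n : ℕ} {p : ℝ} (P : SimpleGraph (Fin n) → Prop) :
    ∑ G : SimpleGraph (Fin n), wt n p G * ind (P G) = gnpProb n p P := by
  rw [gnpProb_eq_sum_wt]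
  refine Finset.sum_congr rfl fun G _ => ?_
  by_cases h : P G <;> simp [ind, h]

noncomputable def Xc {n : ℕ} (G : SimpleGraph (Fin n)) : ℝ :=
  ∑ v : Fin n, ind (iso G v)

lemma E1 {n : ℕ} {p : ℝ} :
    ∑ G : SimpleGraph (Fin n), wt n p G * Xc G = (n : ℝ) * (1 - p) ^ (n - 1) := by
  calc ∑ G : SimpleGraph (Fin n), wt n p G * Xc G
      = ∑ G : SimpleGraph (Fin n), ∑ v : Fin n, wt n p G * ind (iso G v) :=
        Finset.sum_congr rfl fun G _ => Finset.mul_sum _ _ _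
    _ = ∑ v : Fin n, ∑ G : SimpleGraph (Fin n), wt n p G * ind (iso G v) :=
        Finset.sum_comm
    _ = ∑ v : Fin n, (1 - p) ^ (n - 1) :=
        Finset.sum_congr rfl fun v _ => by rw [sum_wt_ind, gnpProb_iso]
    _ = (n : ℝ) * (1 - p) ^ (n - 1) := by
        rw [Finset.sum_const, Finset.card_univ, Fintype.card_fin, nsmul_eq_mul]

lemma ind_mul_ind (P Q : Prop) : ind P * ind Q = ind (P ∧ Q) := by
  by_cases h1 : P <;> by_cases h2 : Q <;> simp [ind, h1, h2]

set_option maxHeartbeats 2000000 in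
lemma E2 {n : ℕ} {p : ℝ} :
    ∑ G : SimpleGraph (Fin n), wt n p G * (Xc G * Xc G)
      = (n : ℝ) * ((1 - p) ^ (n - 1) + ((n : ℝ) - 1) * (1 - p) ^ (2 * n - 3)) := by
  calc ∑ G : SimpleGraph (Fin n), wt n p G * (Xc G * Xc G)
      = ∑ G : SimpleGraph (Fin n), ∑ u : Fin n, ∑ v : Fin n,
          wt n p G * ind (iso G u ∧ iso G v) := by
        refine Finset.sum_congr rfl fun G _ => ?_
        rw [Xc, Finset.sum_mul_sum, Finset.mul_sum]
        refine Finset.sum_congr rfl fun u _ => ?_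
        rw [Finset.mul_sum]
        refine Finset.sum_congr rfl fun v _ => ?_
        rw [ind_mul_ind]
    _ = ∑ u : Fin n, ∑ v : Fin n, ∑ G : SimpleGraph (Fin n),
          wt n p G * ind (iso G u ∧ iso G v) := by
        rw [Finset.sum_comm]
        exact Finset.sum_congr rfl fun u _ => Finset.sum_comm
    _ = ∑ u : Fin n, ∑ v : Fin n, gnpProb n p (fun G => iso G u ∧ iso G v) :=
        Finset.sum_congr rfl fun u _ => Finset.sum_congr rfl fun v _ => sum_wt_ind _
    _ = ∑ u : Fin n, ((1 - p) ^ (n - 1) + ((n : ℝ) - 1) * (1 - p) ^ (2 * n - 3)) := by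
        refine Finset.sum_congr rfl fun u _ => ?_
        rw [← Finset.add_sum_erase _ _ (Finset.mem_univ u)]
        congr 1
        · have : (fun G : SimpleGraph (Fin n) => iso G u ∧ iso G u) = fun G => iso G u := by
            funext G; exact and_self _
          rw [this, gnpProb_iso]
        · calc ∑ v ∈ Finset.univ.erase u, gnpProb n p (fun G => iso G u ∧ iso G v)
              = ∑ v ∈ Finset.univ.erase u, (1 - p) ^ (2 * n - 3) := by
                refine Finset.sum_congr rfl fun v hv => ?_
                exact gnpProb_iso_pair (Ne.symm (Finset.mem_erase.1 hv).1)
            _ = ((n : ℝ) - 1) * (1 - p) ^ (2 * n - 3) := by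
                rw [Finset.sum_const, Finset.card_erase_of_mem (Finset.mem_univ u),
                  Finset.card_univ, Fintype.card_fin, nsmul_eq_mul]
                congr 1
                have hn : 1 ≤ n := Fin.pos u
                push_cast [Nat.cast_sub hn]
                ring
    _ = (n : ℝ) * ((1 - p) ^ (n - 1) + ((n : ℝ) - 1) * (1 - p) ^ (2 * n - 3)) := by
        rw [Finset.sum_const, Finset.card_univ, Fintype.card_fin, nsmul_eq_mul]

lemma cheb {n : ℕ} {p : ℝ} (hp0 : 0 ≤ p) (hp1 : p ≤ 1) :
    gnpProb n p (fun G => ¬ ∃ v, iso G v) * ((n : ℝ) * (1 - p) ^ (n - 1)) ^ 2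
      ≤ (n : ℝ) * ((1 - p) ^ (n - 1) + ((n : ℝ) - 1) * (1 - p) ^ (2 * n - 3))
        - ((n : ℝ) * (1 - p) ^ (n - 1)) ^ 2 := by
  set μ : ℝ := (n : ℝ) * (1 - p) ^ (n - 1) with hμ
  have key : ∑ G : SimpleGraph (Fin n), wt n p G * (Xc G - μ) ^ 2
      = (n : ℝ) * ((1 - p) ^ (n - 1) + ((n : ℝ) - 1) * (1 - p) ^ (2 * n - 3)) - μ ^ 2 := by
    calc ∑ G : SimpleGraph (Fin n), wt n p G * (Xc G - μ) ^ 2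
        = ∑ G : SimpleGraph (Fin n),
            (wt n p G * (Xc G * Xc G) - 2 * μ * (wt n p G * Xc G) + μ ^ 2 * wt n p G) :=
          Finset.sum_congr rfl fun G _ => by ring
      _ = ∑ G : SimpleGraph (Fin n), wt n p G * (Xc G * Xc G)
            - 2 * μ * ∑ G : SimpleGraph (Fin n), wt n p G * Xc G
            + μ ^ 2 * ∑ G : SimpleGraph (Fin n), wt n p G := by
          rw [Finset.sum_add_distrib, Finset.sum_sub_distrib, ← Finset.mul_sum, ← Finset.mul_sum]
      _ = (n : ℝ) * ((1 - p) ^ (n - 1) + ((n : ℝ) - 1) * (1 - p) ^ (2 * n - 3)) - μ ^ 2 := by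
          rw [E1, E2, sum_wt, ← hμ]; ring
  rw [← key, gnpProb_eq_sum_wt, Finset.sum_mul]
  refine Finset.sum_le_sum fun G _ => ?_
  by_cases h : ∃ v, iso G v
  · rw [if_neg (not_not_intro h), zero_mul]
    exact mul_nonneg (wt_nonneg hp0 hp1 G) (sq_nonneg _)
  · rw [if_pos h]
    have hX : Xc G = 0 := Finset.sum_eq_zero fun v _ => by
      have hv : ¬ iso G v := fun hv => h ⟨v, hv⟩
      simp [ind, hv]
    rw [hX]
    exact le_of_eq (by ring)

lemma prob_no_iso {n : ℕ} {p : ℝ} (hn : 2 ≤ n) (hp0 : 0 ≤ p) (hp1 : p ≤ 1/2) :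
    gnpProb n p (fun G => ¬ ∃ v, iso G v)
      ≤ 1 / ((n : ℝ) * (1 - p) ^ (n - 1)) + 2 * p := by
  obtain ⟨m, rfl⟩ : ∃ m, n = m + 2 := ⟨n - 2, by omega⟩
  have h1 : (m + 2) - 1 = m + 1 := by omega
  have h2 : 2 * (m + 2) - 3 = 2 * m + 1 := by omega
  have hq0 : (0:ℝ) < 1 - p := by linarith
  have hq : (1:ℝ)/2 ≤ 1 - p := by linarith
  set q : ℝ := 1 - p with hqdef
  have hcheb := cheb (n := m + 2) (p := p) hp0 (by linarith)
  rw [h1, h2] at hcheb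
  set μ : ℝ := ((m + 2 : ℕ) : ℝ) * q ^ (m + 1) with hμ
  have hμpos : 0 < μ := by
    apply mul_pos _ (pow_pos hq0 _)
    positivity
  rw [h1]
  have hgoal : gnpProb (m+2) p (fun G => ¬ ∃ v, iso G v) * μ^2 ≤ (1/μ + 2*p) * μ^2 := by
    refine le_trans hcheb ?_
    have expand : (1/μ + 2*p) * μ^2 = μ + 2*p*μ^2 := by
      field_simp
    rw [expand]
    -- need: (m+2)*(q^(m+1) + ((m+2)-1)*q^(2m+1)) - μ² ≤ μ + 2pμ²
    have hqpow : (0:ℝ) ≤ q ^ (2*m+1) := le_of_lt (pow_pos hq0 _)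
    have hsq : μ^2 = ((m+2:ℕ):ℝ)^2 * (q^(2*m+1) * q) := by
      rw [hμ]
      have : q ^ (m+1) * q ^ (m+1) = q ^ (2*m+1) * q := by
        rw [← pow_add, ← pow_succ]
        congr 1
        omega
      calc (((m+2:ℕ):ℝ) * q^(m+1))^2 = ((m+2:ℕ):ℝ)^2 * (q^(m+1) * q^(m+1)) := by ring
        _ = ((m+2:ℕ):ℝ)^2 * (q^(2*m+1) * q) := by rw [this]
    have hE2exp : ((m+2:ℕ):ℝ) * (q^(m+1) + (((m+2:ℕ):ℝ) - 1) * q^(2*m+1))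
        = μ + ((m+2:ℕ):ℝ) * (((m+2:ℕ):ℝ) - 1) * q^(2*m+1) := by
      rw [hμ]; ring
    rw [hE2exp, hsq]
    have hkey : ((m+2:ℕ):ℝ) * (((m+2:ℕ):ℝ) - 1) * q^(2*m+1)
        ≤ (1 + 2*p) * (((m+2:ℕ):ℝ)^2 * (q^(2*m+1) * q)) := by
      have hc : (1:ℝ) ≤ (1 + 2*p) * q := by nlinarith
      have hm2 : (1:ℝ) ≤ ((m+2:ℕ):ℝ) := by push_cast; linarith [Nat.cast_nonneg (α := ℝ) m]
      nlinarith [mul_nonneg (mul_nonneg (le_trans zero_le_one hm2) (by linarith : (0:ℝ) ≤ ((m+2:ℕ):ℝ))) hqpow]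
    linarith
  exact le_of_mul_le_mul_right hgoal (by positivity : (0:ℝ) < μ^2)

lemma gnpProb_mono {n : ℕ} {p : ℝ} (hp0 : 0 ≤ p) (hp1 : p ≤ 1)
    {P Q : SimpleGraph (Fin n) → Prop} (h : ∀ G, P G → Q G) :
    gnpProb n p P ≤ gnpProb n p Q := by
  rw [gnpProb_eq_sum_wt, gnpProb_eq_sum_wt]
  refine Finset.sum_le_sum fun G _ => ?_
  by_cases hP : P G
  · rw [if_pos hP, if_pos (h G hP)]
  · rw [if_neg hP]
    split_ifs
    · exact wt_nonneg hp0 hp1 G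
    · exact le_refl 0

lemma gnpProb_compl {n : ℕ} {p : ℝ} (P : SimpleGraph (Fin n) → Prop) :
    gnpProb n p P + gnpProb n p (fun G => ¬ P G) = 1 := by
  rw [gnpProb_eq_sum_wt, gnpProb_eq_sum_wt, ← Finset.sum_add_distrib, ← sum_wt (n := n) (p := p)]
  refine Finset.sum_congr rfl fun G _ => ?_
  by_cases h : P G <;> simp [h]

lemma iso_sullivan {n : ℕ} {G : SimpleGraph (Fin n)} {v : Fin n} (hv : iso G v)
    (D : Fin n → Fin n → Prop) (hD : Orients D G) : SullivanVertex D v := by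
  have h : inNbr D v = ∅ := by
    ext w
    simp only [inNbr, Set.mem_setOf_eq, Set.mem_empty_iff_false, iff_false, not_and]
    intro hw hDwv
    exact hv w (((hD.2 w v).2 (Or.inl hDwv)).symm)
  rw [SullivanVertex, h]
  simp

end Stmt14

set_option maxHeartbeats 2000000 in
/-- if `ε > 0` and `p = p(n) ∈ [0,1]` satisfies
`p(n) ≤ (1-ε) log n / n` for all large `n`, then a.a.s. every orientation of `G(n,p)`
contains a Sullivan vertex. -/
theorem stmt_14 (ε : ℝ) (hε : 0 < ε) (p : ℕ → ℝ) (hp : ∀ n, p n ∈ Set.Icc (0 : ℝ) 1)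
    (hub : ∀ᶠ n : ℕ in atTop, p n ≤ (1 - ε) * Real.log n / n) :
    Tendsto (fun n => gnpProb n (p n) (fun G =>
        ∀ D : Fin n → Fin n → Prop, Orients D G → ∃ v, SullivanVertex D v))
      atTop (nhds 1) := by
  have hp0 : ∀ n, 0 ≤ p n := fun n => (hp n).1
  have hp1 : ∀ n, p n ≤ 1 := fun n => (hp n).2
  set e : ℝ := min ε (1/2) with he
  have he0 : 0 < e := lt_min hε (by norm_num)
  have he12 : e ≤ 1/2 := min_le_right _ _
  have heε : e ≤ ε := min_le_left _ _
  -- refined upper bound on p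
  have hub' : ∀ᶠ n : ℕ in atTop, p n ≤ (1 - e) * Real.log n / n := by
    filter_upwards [hub, eventually_ge_atTop 1] with n h1 h2
    have hn1 : (1:ℝ) ≤ n := by exact_mod_cast h2
    have hL : 0 ≤ Real.log n := Real.log_nonneg hn1
    have hn0 : (0:ℝ) < n := by linarith
    have hmul : (1 - ε) * Real.log n ≤ (1 - e) * Real.log n := by nlinarith
    have hdiv : (1 - ε) * Real.log n / n ≤ (1 - e) * Real.log n / n := by
      rw [div_le_div_iff₀ hn0 hn0]
      nlinarith
    linarith
  -- p tends to 0
  have hlogdiv : Tendsto (fun n : ℕ => Real.log n / n) atTop (nhds 0) :=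
    Real.isLittleO_log_id_atTop.tendsto_div_nhds_zero.comp tendsto_natCast_atTop_atTop
  have hgtend : Tendsto (fun n : ℕ => (1 - e) * Real.log n / n) atTop (nhds 0) := by
    have h := hlogdiv.const_mul (1 - e)
    simp only [mul_zero] at h
    refine h.congr fun n => ?_
    ring
  have hptend : Tendsto p atTop (nhds 0) :=
    squeeze_zero' (Eventually.of_forall hp0) hub' hgtend
  -- the error term tends to 0
  have Ttend : Tendsto (fun n : ℕ => Real.exp (-(e/2) * Real.log n) + 2 * p n)
      atTop (nhds 0) := by
    have l1 : Tendsto (fun n : ℕ => Real.log n) atTop atTop :=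
      Real.tendsto_log_atTop.comp tendsto_natCast_atTop_atTop
    have l2 : Tendsto (fun n : ℕ => (e/2) * Real.log n) atTop atTop :=
      l1.const_mul_atTop (by positivity)
    have l3 : Tendsto (fun n : ℕ => -((e/2) * Real.log n)) atTop atBot :=
      tendsto_neg_atTop_atBot.comp l2
    have l4 : Tendsto (fun n : ℕ => Real.exp (-((e/2) * Real.log n))) atTop (nhds 0) :=
      Real.tendsto_exp_atBot.comp l3
    have l5 : Tendsto (fun n : ℕ => 2 * p n) atTop (nhds 0) := by
      have h := hptend.const_mul (2:ℝ)
      simpa using h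
    have := l4.add l5
    simp only [add_zero] at this
    refine this.congr fun n => ?_
    rw [neg_mul]
  -- eventual smallness of p
  have hsmall12 : ∀ᶠ n : ℕ in atTop, p n ≤ 1/2 :=
    (hptend.eventually_le_const (by norm_num : (0:ℝ) < 1/2))
  have hsmall4 : ∀ᶠ n : ℕ in atTop, p n ≤ e/4 :=
    (hptend.eventually_le_const (by positivity : (0:ℝ) < e/4))
  -- the main eventual lower bound
  have main : ∀ᶠ n : ℕ in atTop,
      1 - (Real.exp (-(e/2) * Real.log n) + 2 * p n)
        ≤ gnpProb n (p n) (fun G =>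
            ∀ D : Fin n → Fin n → Prop, Orients D G → ∃ v, SullivanVertex D v) := by
    filter_upwards [hub', hsmall12, hsmall4, eventually_ge_atTop 2] with n hple hp12 hp14 hn2
    set P : ℝ := p n with hP
    set q : ℝ := 1 - P with hq
    have hP0 : 0 ≤ P := hp0 n
    have hn2' : (2:ℝ) ≤ n := by exact_mod_cast hn2
    have hn0 : (0:ℝ) < n := by linarith
    have hL : 0 ≤ Real.log n := Real.log_nonneg (by linarith)
    have hq0 : 0 < q := by rw [hq]; linarith
    have hq1 : q ≤ 1 := by rw [hq]; linarith
    -- bound on -log q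
    have hlogq : -Real.log q ≤ P + 2*P^2 := by
      have h := Real.log_le_sub_one_of_pos (inv_pos.2 hq0)
      rw [Real.log_inv] at h
      have h2 : 1 ≤ (1 + P + 2*P^2) * q := by nlinarith
      have h3 : q⁻¹ ≤ 1 + P + 2*P^2 := by
        rw [← one_div]
        exact (div_le_iff₀ hq0).2 (by linarith)
      linarith
    have hlq0 : 0 ≤ -Real.log q := by
      have := Real.log_nonpos hq0.le hq1
      linarith
    -- n * p ≤ (1-e) log n
    have hnp : (n:ℝ) * P ≤ (1-e) * Real.log n := by
      have := (le_div_iff₀ hn0).1 hple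
      linarith
    -- key exponent bound
    have hstep : ((n:ℝ) - 1) * (-Real.log q) ≤ (1 - e/2) * Real.log n := by
      have a1 : ((n:ℝ)-1) * (-Real.log q) ≤ (n:ℝ) * (-Real.log q) := by linarith
      have a2 : (n:ℝ) * (-Real.log q) ≤ (n:ℝ) * (P + 2*P^2) :=
        mul_le_mul_of_nonneg_left hlogq (by linarith)
      have a4 : (n:ℝ) * (P + 2*P^2) = (n*P) + 2*P*(n*P) := by ring
      have a5 : (n:ℝ)*P + 2*P*((n:ℝ)*P) ≤ (1-e)*Real.log n + 2*P*((1-e)*Real.log n) :=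
        add_le_add hnp (mul_le_mul_of_nonneg_left hnp (by linarith))
      have a6 : 2*P*((1-e)*Real.log n) ≤ (e/2)*Real.log n := by
        have hfac : 2*P*(1-e) ≤ e/2 := by nlinarith [mul_nonneg hP0 he0.le]
        have h7 := mul_le_mul_of_nonneg_right hfac hL
        linarith [h7]
      linarith [a1, a2, a4, a5, a6]
    -- q^(n-1) is not too small
    have hqpow : Real.exp (-(1 - e/2) * Real.log n) ≤ q^(n-1) := by
      have hpoweq : q^(n-1) = Real.exp (((n-1:ℕ):ℝ) * Real.log q) := by
        rw [Real.exp_nat_mul, Real.exp_log hq0]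
      rw [hpoweq]
      apply Real.exp_le_exp.2
      have hcast : ((n-1:ℕ):ℝ) = (n:ℝ) - 1 := by
        have h1 : 1 ≤ n := by omega
        push_cast [h1]
        ring
      rw [hcast]
      linarith [hstep]
    have hfin : 1/((n:ℝ) * q^(n-1)) ≤ Real.exp (-(e/2) * Real.log n) := by
      have hexp : Real.exp ((e/2) * Real.log n) ≤ (n:ℝ) * q^(n-1) := by
        have hsplit : Real.exp ((e/2) * Real.log n)
            = Real.exp (Real.log n) * Real.exp (-(1 - e/2) * Real.log n) := by
          rw [← Real.exp_add]
          congr 1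
          ring
        rw [hsplit, Real.exp_log hn0]
        exact mul_le_mul_of_nonneg_left hqpow (by linarith)
      calc 1/((n:ℝ) * q^(n-1)) ≤ 1/Real.exp ((e/2) * Real.log n) :=
            one_div_le_one_div_of_le (Real.exp_pos _) hexp
        _ = Real.exp (-(e/2) * Real.log n) := by
            rw [one_div, ← Real.exp_neg]
            congr 1
            ring
    -- probabilistic bounds
    have hno : gnpProb n P (fun G => ¬ ∃ v, Stmt14.iso G v)
        ≤ 1/((n:ℝ) * (1 - P)^(n-1)) + 2*P := Stmt14.prob_no_iso hn2 hP0 hp12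
    have hcompl : gnpProb n P (fun G => ∃ v, Stmt14.iso G v)
        + gnpProb n P (fun G => ¬ ∃ v, Stmt14.iso G v) = 1 :=
      Stmt14.gnpProb_compl _
    have hmono : gnpProb n P (fun G => ∃ v, Stmt14.iso G v)
        ≤ gnpProb n P (fun G =>
            ∀ D : Fin n → Fin n → Prop, Orients D G → ∃ v, SullivanVertex D v) := by
      refine Stmt14.gnpProb_mono hP0 (hp1 n) fun G hG => ?_
      obtain ⟨v, hv⟩ := hG
      exact fun D hD => ⟨v, Stmt14.iso_sullivan hv D hD⟩
    have hqeq : (1 - P)^(n-1) = q^(n-1) := by rw [hq]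
    rw [hqeq] at hno
    linarith
  -- upper bound by 1
  have upper : ∀ n : ℕ, gnpProb n (p n) (fun G =>
      ∀ D : Fin n → Fin n → Prop, Orients D G → ∃ v, SullivanVertex D v) ≤ 1 := by
    intro n
    have h := Stmt14.gnpProb_mono (n := n) (hp0 n) (hp1 n)
      (P := fun G => ∀ D : Fin n → Fin n → Prop, Orients D G → ∃ v, SullivanVertex D v)
      (Q := fun _ => True) (fun G _ => trivial)
    rwa [Stmt14.gnpProb_true] at h
  have lim1 : Tendsto (fun n : ℕ =>
      1 - (Real.exp (-(e/2) * Real.log n) + 2 * p n)) atTop (nhds 1) := by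
    have h := (tendsto_const_nhds (X := ℝ) (x := (1:ℝ)) (f := (atTop : Filter ℕ))).sub Ttend
    simpa using h
  exact tendsto_of_tendsto_of_tendsto_of_le_of_le' lim1 tendsto_const_nhds main
    (Eventually.of_forall upper)
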